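/- Let N ≥ 1 be a natural number and let D = D_{N-1} ∘ D_{N-2} ∘ ··· ∘ D₁ ∘ D₀ be the composition of the lowering operators D₀, …, D_{N-1}. Then for every smooth ψ : ℂ → ℂ one has L_N(Dψ) = D(L₀ψ), where L₀ψ = -(1+|z|²)²∂(∂̄ψ) is (minus) the Laplace–Beltrami operator of the round sphere in stereographic coordinates. Consequently the Dirac monopole operator H_{2N} = L_N - N² satisfies H_{2N}∘D = D∘(L₀ - N²). -/

import Mathlib

open Complex ComplexConjugate MeasureTheory

noncomputable section

/-- Partial derivative in the x-direction (identifying ℂ with ℝ²). -/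
def pdx (f : ℂ → ℂ) (z : ℂ) : ℂ := fderiv ℝ f z 1

/-- Partial derivative in the y-direction. -/
def pdy (f : ℂ → ℂ) (z : ℂ) : ℂ := fderiv ℝ f z Complex.I

/-- Wirtinger derivative ∂ = (∂ₓ - i ∂_y)/2. -/
def wd (f : ℂ → ℂ) (z : ℂ) : ℂ := (pdx f z - Complex.I * pdy f z) / 2

/-- Wirtinger derivative ∂̄ = (∂ₓ + i ∂_y)/2. -/
def wdb (f : ℂ → ℂ) (z : ℂ) : ℂ := (pdx f z + Complex.I * pdy f z) / 2

/-- Lowering operator D_N ψ = (1+|z|²)∂̄ψ + Nzψ. -/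
def DN (N : ℝ) (ψ : ℂ → ℂ) (z : ℂ) : ℂ :=
  (1 + z * conj z) * wdb ψ z + (N : ℂ) * z * ψ z

/-- Raising operator D_N* ψ = -(1+|z|²)∂ψ + (N+1)z̄ψ. -/
def DNs (N : ℝ) (ψ : ℂ → ℂ) (z : ℂ) : ℂ :=
  -(1 + z * conj z) * wd ψ z + ((N : ℂ) + 1) * conj z * ψ z

/-- Dirac monopole operator
L_N ψ = -(1+|z|²)²∂∂̄ψ - Nz(1+|z|²)∂ψ + Nz̄(1+|z|²)∂̄ψ + N²(1+|z|²)ψ. -/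
def LN (N : ℝ) (ψ : ℂ → ℂ) (z : ℂ) : ℂ :=
  -(1 + z * conj z)^2 * wd (wdb ψ) z
    - (N : ℂ) * z * (1 + z * conj z) * wd ψ z
    + (N : ℂ) * conj z * (1 + z * conj z) * wdb ψ z
    + (N : ℂ)^2 * (1 + z * conj z) * ψ z

/-- The chain of lowering operators: `lowerChain N ψ = D_{N-1}(D_{N-2}(··· D₀(ψ)···))`. -/
def lowerChain : ℕ → (ℂ → ℂ) → ℂ → ℂ
  | 0, ψ => ψ
  | k + 1, ψ => fun z => DN (k : ℝ) (lowerChain k ψ) z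

/-- Minus the Laplace–Beltrami operator of the round sphere in stereographic
coordinates: L₀ψ = -(1+|z|²)²∂(∂̄ψ). -/
def L0 (ψ : ℂ → ℂ) (z : ℂ) : ℂ := -(1 + z * conj z)^2 * wd (wdb ψ) z

-- smoothness of pdx/pdy/wd/wdb
lemma pd_contDiff (f : ℂ → ℂ) (hf : ContDiff ℝ (⊤ : ℕ∞) f) (v : ℂ) :
    ContDiff ℝ (⊤ : ℕ∞) (fun z => fderiv ℝ f z v) :=
  (hf.fderiv_right (le_refl _)).clm_apply contDiff_const

lemma wdb_contDiff {f : ℂ → ℂ} (hf : ContDiff ℝ (⊤ : ℕ∞) f) :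
    ContDiff ℝ (⊤ : ℕ∞) (wdb f) := by
  unfold wdb pdx pdy
  exact ((pd_contDiff f hf 1).add (contDiff_const.mul (pd_contDiff f hf I))).div_const 2

lemma wd_contDiff {f : ℂ → ℂ} (hf : ContDiff ℝ (⊤ : ℕ∞) f) :
    ContDiff ℝ (⊤ : ℕ∞) (wd f) := by
  unfold wd pdx pdy
  exact ((pd_contDiff f hf 1).sub (contDiff_const.mul (pd_contDiff f hf I))).div_const 2

lemma conj_contDiff : ContDiff ℝ (⊤ : ℕ∞) (fun z : ℂ => conj z) :=
  Complex.conjCLE.contDiff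

-- pdx/pdy linear rules
lemma pdx_add {f g : ℂ → ℂ} {z : ℂ} (hf : DifferentiableAt ℝ f z)
    (hg : DifferentiableAt ℝ g z) :
    pdx (fun w => f w + g w) z = pdx f z + pdx g z := by
  simp [pdx, fderiv_fun_add hf hg]
lemma pdy_add {f g : ℂ → ℂ} {z : ℂ} (hf : DifferentiableAt ℝ f z)
    (hg : DifferentiableAt ℝ g z) :
    pdy (fun w => f w + g w) z = pdy f z + pdy g z := by
  simp [pdy, fderiv_fun_add hf hg]
lemma pdx_mul {f g : ℂ → ℂ} {z : ℂ} (hf : DifferentiableAt ℝ f z)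
    (hg : DifferentiableAt ℝ g z) :
    pdx (fun w => f w * g w) z = pdx f z * g z + f z * pdx g z := by
  simp [pdx, fderiv_fun_mul hf hg, smul_eq_mul]; ring
lemma pdy_mul {f g : ℂ → ℂ} {z : ℂ} (hf : DifferentiableAt ℝ f z)
    (hg : DifferentiableAt ℝ g z) :
    pdy (fun w => f w * g w) z = pdy f z * g z + f z * pdy g z := by
  simp [pdy, fderiv_fun_mul hf hg, smul_eq_mul]; ring

lemma wd_add {f g : ℂ → ℂ} {z : ℂ} (hf : DifferentiableAt ℝ f z)
    (hg : DifferentiableAt ℝ g z) :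
    wd (fun w => f w + g w) z = wd f z + wd g z := by
  simp [wd, pdx_add hf hg, pdy_add hf hg]; ring
lemma wdb_add {f g : ℂ → ℂ} {z : ℂ} (hf : DifferentiableAt ℝ f z)
    (hg : DifferentiableAt ℝ g z) :
    wdb (fun w => f w + g w) z = wdb f z + wdb g z := by
  simp [wdb, pdx_add hf hg, pdy_add hf hg]; ring
lemma wd_mul {f g : ℂ → ℂ} {z : ℂ} (hf : DifferentiableAt ℝ f z)
    (hg : DifferentiableAt ℝ g z) :
    wd (fun w => f w * g w) z = wd f z * g z + f z * wd g z := by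
  simp [wd, pdx_mul hf hg, pdy_mul hf hg]; ring
lemma wdb_mul {f g : ℂ → ℂ} {z : ℂ} (hf : DifferentiableAt ℝ f z)
    (hg : DifferentiableAt ℝ g z) :
    wdb (fun w => f w * g w) z = wdb f z * g z + f z * wdb g z := by
  simp [wdb, pdx_mul hf hg, pdy_mul hf hg]; ring

-- atoms
lemma wd_id {z : ℂ} : wd (fun w => w) z = 1 := by
  simp [wd, pdx, pdy, fderiv_id']
lemma wdb_id {z : ℂ} : wdb (fun w => w) z = 0 := by
  simp [wdb, pdx, pdy, fderiv_id']
lemma fderiv_conj (z : ℂ) : fderiv ℝ (fun w : ℂ => conj w) z = Complex.conjCLE.toContinuousLinearMap := by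
  have : (fun w : ℂ => conj w) = ⇑Complex.conjCLE := rfl
  rw [this, Complex.conjCLE.fderiv]
lemma wd_conj {z : ℂ} : wd (fun w => conj w) z = 0 := by
  simp [wd, pdx, pdy, fderiv_conj]
lemma wdb_conj {z : ℂ} : wdb (fun w => conj w) z = 1 := by
  simp [wdb, pdx, pdy, fderiv_conj]
lemma wd_const {c z : ℂ} : wd (fun _ => c) z = 0 := by
  simp [wd, pdx, pdy]
lemma wdb_const {c z : ℂ} : wdb (fun _ => c) z = 0 := by
  simp [wdb, pdx, pdy]

lemma top1 : ((⊤:ℕ∞) : WithTop ℕ∞) ≠ 0 := by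
  simp
lemma top2 : (2 : WithTop ℕ∞) ≤ ((⊤:ℕ∞) : WithTop ℕ∞) := by
  have : ((2:ℕ∞) : WithTop ℕ∞) ≤ ((⊤:ℕ∞) : WithTop ℕ∞) := by
    exact_mod_cast (le_top : (2:ℕ∞) ≤ ⊤)
  simpa using this

lemma pd_diff {f : ℂ → ℂ} (hf : ContDiff ℝ (⊤ : ℕ∞) f) (v : ℂ) :
    Differentiable ℝ (fun z => fderiv ℝ f z v) :=
  (pd_contDiff f hf v).differentiable top1

lemma pdx_diff {f : ℂ → ℂ} (hf : ContDiff ℝ (⊤ : ℕ∞) f) :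
    Differentiable ℝ (pdx f) := pd_diff hf 1
lemma pdy_diff {f : ℂ → ℂ} (hf : ContDiff ℝ (⊤ : ℕ∞) f) :
    Differentiable ℝ (pdy f) := pd_diff hf I

lemma pdx_const_mul {g : ℂ → ℂ} {c z : ℂ} (hg : DifferentiableAt ℝ g z) :
    pdx (fun w => c * g w) z = c * pdx g z := by
  simp [pdx, fderiv_const_mul hg, smul_eq_mul]
lemma pdy_const_mul {g : ℂ → ℂ} {c z : ℂ} (hg : DifferentiableAt ℝ g z) :
    pdy (fun w => c * g w) z = c * pdy g z := by
  simp [pdy, fderiv_const_mul hg, smul_eq_mul]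

lemma pd_symm {f : ℂ → ℂ} (hf : ContDiff ℝ (⊤ : ℕ∞) f) (z : ℂ) :
    pdx (pdy f) z = pdy (pdx f) z := by
  have hsymm : ∀ v w : ℂ, fderiv ℝ (fderiv ℝ f) z v w = fderiv ℝ (fderiv ℝ f) z w v := by
    intro v w
    exact (hf.contDiffAt.isSymmSndFDerivAt (by simpa using top2)).eq v w
  have hx : pdx (pdy f) z = fderiv ℝ (fderiv ℝ f) z 1 I := by
    have : pdy f = fun w => (fderiv ℝ f w) I := rfl
    rw [pdx, this, fderiv_clm_apply ((hf.fderiv_right (m := (⊤ : ℕ∞)) (le_refl _)).differentiable top1 z)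
      (differentiableAt_const I)]
    simp
  have hy : pdy (pdx f) z = fderiv ℝ (fderiv ℝ f) z I 1 := by
    have : pdx f = fun w => (fderiv ℝ f w) 1 := rfl
    rw [pdy, this, fderiv_clm_apply ((hf.fderiv_right (m := (⊤ : ℕ∞)) (le_refl _)).differentiable top1 z)
      (differentiableAt_const 1)]
    simp
  rw [hx, hy, hsymm]

lemma wdb_wd {f : ℂ → ℂ} (hf : ContDiff ℝ (⊤ : ℕ∞) f) (z : ℂ) :
    wdb (wd f) z = wd (wdb f) z := by
  have hwd : wd f = fun w => (1/2 : ℂ) * pdx f w + (-(Complex.I)/2) * pdy f w := by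
    funext w; rw [wd]; ring
  have hwdb : wdb f = fun w => (1/2 : ℂ) * pdx f w + (Complex.I/2) * pdy f w := by
    funext w; rw [wdb]; ring
  have dx := fun z => (pdx_diff hf z)
  have dy := fun z => (pdy_diff hf z)
  have e1 : pdx (wd f) z = (1/2 : ℂ) * pdx (pdx f) z + (-(Complex.I)/2) * pdx (pdy f) z := by
    rw [hwd, pdx_add ((dx z).const_mul _) ((dy z).const_mul _),
      pdx_const_mul (dx z), pdx_const_mul (dy z)]
  have e2 : pdy (wd f) z = (1/2 : ℂ) * pdy (pdx f) z + (-(Complex.I)/2) * pdy (pdy f) z := by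
    rw [hwd, pdy_add ((dx z).const_mul _) ((dy z).const_mul _),
      pdy_const_mul (dx z), pdy_const_mul (dy z)]
  have e3 : pdx (wdb f) z = (1/2 : ℂ) * pdx (pdx f) z + (Complex.I/2) * pdx (pdy f) z := by
    rw [hwdb, pdx_add ((dx z).const_mul _) ((dy z).const_mul _),
      pdx_const_mul (dx z), pdx_const_mul (dy z)]
  have e4 : pdy (wdb f) z = (1/2 : ℂ) * pdy (pdx f) z + (Complex.I/2) * pdy (pdy f) z := by
    rw [hwdb, pdy_add ((dx z).const_mul _) ((dy z).const_mul _),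
      pdy_const_mul (dx z), pdy_const_mul (dy z)]
  rw [wdb, wd, e1, e2, e3, e4, pd_symm hf z]
  ring

@[fun_prop] lemma conj_diff : Differentiable ℝ (fun z : ℂ => conj z) :=
  Complex.conjCLE.differentiable

lemma wdb_diff {f : ℂ → ℂ} (hf : ContDiff ℝ (⊤ : ℕ∞) f) :
    Differentiable ℝ (wdb f) := (wdb_contDiff hf).differentiable top1
lemma wd_diff {f : ℂ → ℂ} (hf : ContDiff ℝ (⊤ : ℕ∞) f) :
    Differentiable ℝ (wd f) := (wd_contDiff hf).differentiable top1

lemma wdb_sub {f g : ℂ → ℂ} {z : ℂ} (hf : DifferentiableAt ℝ f z)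
    (hg : DifferentiableAt ℝ g z) :
    wdb (fun w => f w - g w) z = wdb f z - wdb g z := by
  simp [wdb, pdx, pdy, fderiv_fun_sub hf hg]; ring
lemma wd_sub {f g : ℂ → ℂ} {z : ℂ} (hf : DifferentiableAt ℝ f z)
    (hg : DifferentiableAt ℝ g z) :
    wd (fun w => f w - g w) z = wd f z - wd g z := by
  simp [wd, pdx, pdy, fderiv_fun_sub hf hg]; ring

lemma wdb_const_mul {g : ℂ → ℂ} {c z : ℂ} (hg : DifferentiableAt ℝ g z) :
    wdb (fun w => c * g w) z = c * wdb g z := by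
  simp [wdb, pdx_const_mul hg, pdy_const_mul hg]; ring
lemma wd_const_mul {g : ℂ → ℂ} {c z : ℂ} (hg : DifferentiableAt ℝ g z) :
    wd (fun w => c * g w) z = c * wd g z := by
  simp [wd, pdx_const_mul hg, pdy_const_mul hg]; ring

lemma wdb_cmul {c z : ℂ} : wdb (fun w => c * w) z = 0 := by
  rw [wdb_const_mul differentiableAt_fun_id, wdb_id, mul_zero]
lemma wd_cmul {c z : ℂ} : wd (fun w => c * w) z = c := by
  rw [wd_const_mul differentiableAt_fun_id, wd_id, mul_one]

lemma DN_contDiff (k : ℝ) {φ : ℂ → ℂ} (hφ : ContDiff ℝ (⊤ : ℕ∞) φ) :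
    ContDiff ℝ (⊤ : ℕ∞) (DN k φ) := by
  unfold DN
  exact ((contDiff_const.add (contDiff_id.mul conj_contDiff)).mul (wdb_contDiff hφ)).add
    ((contDiff_const.mul contDiff_id).mul hφ)

lemma lowerChain_contDiff (n : ℕ) {ψ : ℂ → ℂ} (hψ : ContDiff ℝ (⊤ : ℕ∞) ψ) :
    ContDiff ℝ (⊤ : ℕ∞) (lowerChain n ψ) := by
  induction n with
  | zero => exact hψ
  | succ n ih => exact DN_contDiff (n : ℝ) ih

lemma L0_contDiff {ψ : ℂ → ℂ} (hψ : ContDiff ℝ (⊤ : ℕ∞) ψ) :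
    ContDiff ℝ (⊤ : ℕ∞) (L0 ψ) := by
  unfold L0
  exact (((contDiff_const.add (contDiff_id.mul conj_contDiff)).pow 2).neg).mul
    (wd_contDiff (wdb_contDiff hψ))

lemma key (k : ℝ) (φ : ℂ → ℂ) (hφ : ContDiff ℝ (⊤ : ℕ∞) φ) (z : ℂ) :
    LN (k + 1) (DN k φ) z = DN k (LN k φ) z := by
  have d0 : Differentiable ℝ φ := hφ.differentiable top1
  have d1 : Differentiable ℝ (wdb φ) := wdb_diff hφ
  have d2 : Differentiable ℝ (wd φ) := wd_diff hφ
  have d3 : Differentiable ℝ (wdb (wdb φ)) := wdb_diff (wdb_contDiff hφ)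
  have d4 : Differentiable ℝ (wd (wdb φ)) := wd_diff (wdb_contDiff hφ)
  have hD : DN k φ = fun w => (1 + w * conj w) * wdb φ w + ((k:ℂ) * w) * φ w := rfl
  have h1 : wdb (DN k φ)
      = fun w => ((k:ℂ) + 1) * (w * wdb φ w) + (1 + w * conj w) * wdb (wdb φ) w := by
    funext w
    rw [hD]
    simp (disch := fun_prop) only [wdb_add, wdb_mul, wdb_id, wdb_conj, wdb_const, wdb_cmul]
    ring
  have h2 : wd (DN k φ) z
      = conj z * wdb φ z + (1 + z * conj z) * wd (wdb φ) z
        + (k:ℂ) * φ z + (k:ℂ) * (z * wd φ z) := by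
    rw [hD]
    simp (disch := fun_prop) only [wd_add, wd_mul, wd_id, wd_conj, wd_const, wd_cmul]
    ring
  have h3 : wd (wdb (DN k φ)) z
      = ((k:ℂ) + 1) * (wdb φ z + z * wd (wdb φ) z) + conj z * wdb (wdb φ) z
        + (1 + z * conj z) * wd (wdb (wdb φ)) z := by
    rw [h1]
    simp (disch := fun_prop) only [wd_add, wd_mul, wd_id, wd_conj, wd_const, wd_cmul]
    ring
  have hL : LN k φ = fun w =>
      (-1 : ℂ) * ((1 + w * conj w) * ((1 + w * conj w) * wd (wdb φ) w))
      + (-(k:ℂ)) * (w * ((1 + w * conj w) * wd φ w))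
      + (k:ℂ) * (conj w * ((1 + w * conj w) * wdb φ w))
      + ((k:ℂ) * (k:ℂ)) * ((1 + w * conj w) * φ w) := by
    funext w; unfold LN; ring
  have h4 : wdb (LN k φ) z
      = -(2 * (1 + z * conj z) * z * wd (wdb φ) z
          + (1 + z * conj z)^2 * wd (wdb (wdb φ)) z)
        - (k:ℂ) * (z * (z * wd φ z + (1 + z * conj z) * wd (wdb φ) z))
        + (k:ℂ) * ((1 + z * conj z) * wdb φ z + conj z * z * wdb φ z
            + conj z * (1 + z * conj z) * wdb (wdb φ) z)
        + (k:ℂ)^2 * (z * φ z + (1 + z * conj z) * wdb φ z) := by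
    rw [hL]
    simp (disch := fun_prop) only [wdb_add, wdb_mul, wdb_id, wdb_conj, wdb_const, wdb_cmul]
    rw [wdb_wd hφ z, wdb_wd (wdb_contDiff hφ) z]
    ring
  have expand : LN (k + 1) (DN k φ) z
      = -(1 + z * conj z)^2 * wd (wdb (DN k φ)) z
        - ((k:ℂ) + 1) * z * (1 + z * conj z) * wd (DN k φ) z
        + ((k:ℂ) + 1) * conj z * (1 + z * conj z) * wdb (DN k φ) z
        + ((k:ℂ) + 1)^2 * (1 + z * conj z) * DN k φ z := by
    unfold LN; push_cast; ring
  have hR : DN k (LN k φ) z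
      = (1 + z * conj z) * wdb (LN k φ) z + (k:ℂ) * z * (LN k φ z) := rfl
  rw [expand, hR, h3, h2, h4]
  simp only [h1]
  simp only [hD, hL]
  push_cast
  ring

/-- with D = D_{N-1}∘···∘D₀ one has L_N(Dψ) = D(L₀ψ); hence
H_{2N}∘D = D∘(L₀ - N²) for the monopole Hamiltonian H_{2N} = L_N - N². -/
theorem monopole_intertwined_with_laplacian
    (N : ℕ) (hN : 1 ≤ N) (ψ : ℂ → ℂ) (hψ : ContDiff ℝ (⊤ : ℕ∞) ψ) :
    ∀ z : ℂ,
      LN (N : ℝ) (lowerChain N ψ) z = lowerChain N (fun w => L0 ψ w) z ∧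
      LN (N : ℝ) (lowerChain N ψ) z - (N : ℂ)^2 * lowerChain N ψ z
        = lowerChain N (fun w => L0 ψ w - (N : ℂ)^2 * ψ w) z := by
  have key2 : ∀ n : ℕ, ∀ z : ℂ, LN (n : ℝ) (lowerChain n ψ) z = lowerChain n (L0 ψ) z := by
    intro n
    induction n with
    | zero =>
      intro z
      unfold LN L0 lowerChain
      push_cast
      ring
    | succ n ih =>
      intro z
      have hchain : ContDiff ℝ (⊤ : ℕ∞) (lowerChain n ψ) := lowerChain_contDiff n hψ
      have e2 : ((n + 1 : ℕ) : ℝ) = (n : ℝ) + 1 := by push_cast; ring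
      have e1 : lowerChain (n+1) ψ = DN (n : ℝ) (lowerChain n ψ) := rfl
      rw [e1, e2, key (n : ℝ) (lowerChain n ψ) hchain z, funext ih]
      rfl
  have lin : ∀ n : ℕ, ∀ f g : ℂ → ℂ, ContDiff ℝ (⊤ : ℕ∞) f → ContDiff ℝ (⊤ : ℕ∞) g →
      ∀ c : ℂ, ∀ z : ℂ, lowerChain n (fun w => f w - c * g w) z
        = lowerChain n f z - c * lowerChain n g z := by
    intro n
    induction n with
    | zero => intro f g _ _ c z; rfl
    | succ n ih =>
      intro f g hf hg c z
      have hF : DifferentiableAt ℝ (lowerChain n f) z :=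
        (lowerChain_contDiff n hf).differentiable top1 z
      have hG : DifferentiableAt ℝ (lowerChain n g) z :=
        (lowerChain_contDiff n hg).differentiable top1 z
      have e : lowerChain n (fun w => f w - c * g w)
          = fun w => lowerChain n f w - c * lowerChain n g w := funext (ih f g hf hg c)
      show DN (n : ℝ) (lowerChain n (fun w => f w - c * g w)) z
        = DN (n : ℝ) (lowerChain n f) z - c * DN (n : ℝ) (lowerChain n g) z
      rw [e]
      unfold DN
      rw [wdb_sub hF (hG.const_mul c), wdb_const_mul hG]
      ring
  intro z
  refine ⟨key2 N z, ?_⟩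
  rw [key2 N z, lin N (L0 ψ) ψ (L0_contDiff hψ) hψ ((N:ℂ)^2) z]
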